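/- Let ⪯' be a second partial order on ℕ compatible with the usual order, possessing a ⪯'-least element, such that the set of strict ⪯'-predecessors of every element is finite and ⪯'-linearly ordered and every element has exactly two immediate ⪯'-successors (the dyadic tree 𝒟), and let JT^𝒟_{2,p} be the completion of c₀₀ under the norm defined exactly as the JT_{2,p} norm but using ⪯'-segments in place of ⪯-segments. Then JT_{2,p} and JT^𝒟_{2,p} are isomorphic: there exists a continuous linear equivalence between them. -/

import Mathlib

open Set Filter Topology

/-- `k` is an immediate successor of `n` in the order `le`. -/
def ImmSucc (le : ℕ → ℕ → Prop) (n k : ℕ) : Prop :=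
  le n k ∧ n ≠ k ∧ ∀ m, le n m → le m k → m = n ∨ m = k

/-- The tree `𝒯`: a partial order on `ℕ` compatible with the usual order, in which the set of
strict predecessors of every element is finite and linearly ordered, and every element has
infinitely many immediate successors. -/
structure IsJTTree (le : ℕ → ℕ → Prop) : Prop where
  refl : ∀ n, le n n
  antisymm : ∀ {m n}, le m n → le n m → m = n
  trans : ∀ {a b c}, le a b → le b c → le a c
  compat : ∀ {m n}, le m n → m ≤ n
  pred_finite : ∀ n, {m | le m n ∧ m ≠ n}.Finite
  pred_linear : ∀ n a b, le a n → le b n → le a b ∨ le b a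
  succ_infinite : ∀ n, {k | ImmSucc le n k}.Infinite

/-- A segment of the tree: a nonempty set of the form `{k : m ⪯ k ∧ k ⪯ n}`. -/
def IsSegment (le : ℕ → ℕ → Prop) (s : Set ℕ) : Prop :=
  ∃ m n, le m n ∧ s = {k | le m k ∧ le k n}

/-- A branch: a maximal linearly ordered subset of `ℕ`. -/
def IsBranch (le : ℕ → ℕ → Prop) (σ : Set ℕ) : Prop :=
  IsChain le σ ∧ ∀ τ, IsChain le τ → σ ⊆ τ → σ = τ

/-- `‖x‖_s = (∑_{i ∈ s} x(i)²)^(1/2)`. -/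
noncomputable def segNorm (x : ℕ → ℝ) (s : Set ℕ) : ℝ :=
  Real.sqrt (∑' i, s.indicator (fun j => (x j) ^ 2) i)

/-- The `JT_{2,p}` norm on finitely supported sequences:
`‖x‖ = sup {(∑_k ‖x‖_{s_k}^p)^(1/p) : s₁,…,s_n pairwise disjoint segments}`. -/
noncomputable def jtNorm (le : ℕ → ℕ → Prop) (p : ℝ) (x : ℕ → ℝ) : ℝ :=
  sSup { r : ℝ | ∃ (n : ℕ) (s : Fin n → Set ℕ),
    (∀ k, IsSegment le (s k)) ∧
    (∀ k l, k ≠ l → Disjoint (s k) (s l)) ∧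
    r = (∑ k : Fin n, segNorm x (s k) ^ p) ^ (1 / p) }

/-- A block sequence of finitely supported vectors. -/
def IsBlockSeq (x : ℕ → ℕ → ℝ) : Prop :=
  (∀ n, (Function.support (x n)).Finite) ∧
  ∀ n i j, x n i ≠ 0 → x (n + 1) j ≠ 0 → i < j

/-- The final segment `σ_{>l} = {k ∈ σ : k > l}`. -/
def finalSeg (σ : Set ℕ) (l : ℕ) : Set ℕ := {k ∈ σ | l < k}

/-- Two final segments are incomparable when their least elements are `le`-incomparable. -/
def IncompFinal (le : ℕ → ℕ → Prop) (A B : Set ℕ) : Prop :=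
  A.Nonempty ∧ B.Nonempty ∧ ¬ le (sInf A) (sInf B) ∧ ¬ le (sInf B) (sInf A)

/-- The dyadic tree `𝒟`: a partial order on `ℕ` compatible with the usual order, with a least
element, in which the set of strict predecessors of every element is finite and linearly
ordered, and every element has exactly two immediate successors. -/
structure IsDyadicTree (le : ℕ → ℕ → Prop) : Prop where
  refl : ∀ n, le n n
  antisymm : ∀ {m n}, le m n → le n m → m = n
  trans : ∀ {a b c}, le a b → le b c → le a c
  compat : ∀ {m n}, le m n → m ≤ n
  pred_finite : ∀ n, {m | le m n ∧ m ≠ n}.Finite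
  pred_linear : ∀ n a b, le a n → le b n → le a b ∨ le b a
  root : ∃ r, ∀ n, le r n
  succ_two : ∀ n, ∃ a b, a ≠ b ∧ {k | ImmSucc le n k} = {a, b}

structure TreeBase (le : ℕ → ℕ → Prop) : Prop where
  refl : ∀ n, le n n
  antisymm : ∀ {m n}, le m n → le n m → m = n
  trans : ∀ {a b c}, le a b → le b c → le a c
  compat : ∀ {m n}, le m n → m ≤ n
  pred_finite : ∀ n, {m | le m n ∧ m ≠ n}.Finite
  pred_linear : ∀ n a b, le a n → le b n → le a b ∨ le b a

def IsRoot (le : ℕ → ℕ → Prop) (n : ℕ) : Prop := ∀ m, le m n → m = n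

namespace TreeBase

variable {le : ℕ → ℕ → Prop}

theorem chain_max (hb : TreeBase le) (s : Finset ℕ) (hne : s.Nonempty)
    (hch : ∀ a ∈ s, ∀ b ∈ s, le a b ∨ le b a) :
    ∃ m ∈ s, ∀ a ∈ s, le a m := by
  refine ⟨s.max' hne, s.max'_mem hne, fun a ha => ?_⟩
  rcases hch a ha _ (s.max'_mem hne) with h | h
  · exact h
  · have : s.max' hne = a := le_antisymm (hb.compat h) (s.le_max' a ha)
    subst this; exact hb.refl _

theorem chain_min (hb : TreeBase le) (s : Finset ℕ) (hne : s.Nonempty)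
    (hch : ∀ a ∈ s, ∀ b ∈ s, le a b ∨ le b a) :
    ∃ m ∈ s, ∀ a ∈ s, le m a := by
  refine ⟨s.min' hne, s.min'_mem hne, fun a ha => ?_⟩
  rcases hch a ha _ (s.min'_mem hne) with h | h
  · have : s.min' hne = a := le_antisymm (s.min'_le a ha) (hb.compat h)
    subst this; exact hb.refl _
  · exact h

theorem exists_pa (hb : TreeBase le) {n : ℕ} (h : ¬ IsRoot le n) :
    ∃ m, le m n ∧ m ≠ n ∧ ∀ k, le k n → k ≠ n → le k m := by
  classical
  have hex : ∃ m, le m n ∧ m ≠ n := by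
    rw [IsRoot] at h
    push_neg at h
    obtain ⟨m, hm1, hm2⟩ := h
    exact ⟨m, hm1, hm2⟩
  set s : Finset ℕ := (hb.pred_finite n).toFinset with hs
  have hmem : ∀ m, m ∈ s ↔ le m n ∧ m ≠ n := by intro m; simp [hs]
  have hne : s.Nonempty := by
    obtain ⟨m, hm⟩ := hex
    exact ⟨m, (hmem m).2 hm⟩
  obtain ⟨m, hm, hmax⟩ := hb.chain_max s hne
    (fun a ha b hbb => hb.pred_linear n a b ((hmem a).1 ha).1 ((hmem b).1 hbb).1)
  rw [hmem] at hm
  exact ⟨m, hm.1, hm.2, fun k h1 h2 => hmax k ((hmem k).2 ⟨h1, h2⟩)⟩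

open Classical in
noncomputable def pa (hb : TreeBase le) (n : ℕ) : ℕ :=
  if h : IsRoot le n then n else (hb.exists_pa h).choose

theorem pa_spec (hb : TreeBase le) {n : ℕ} (h : ¬ IsRoot le n) :
    le (hb.pa n) n ∧ hb.pa n ≠ n ∧ ∀ k, le k n → k ≠ n → le k (hb.pa n) := by
  classical
  rw [pa, dif_neg h]
  exact (hb.exists_pa h).choose_spec

theorem pa_le (hb : TreeBase le) {n : ℕ} (h : ¬ IsRoot le n) : le (hb.pa n) n := (hb.pa_spec h).1

theorem pa_ne (hb : TreeBase le) {n : ℕ} (h : ¬ IsRoot le n) : hb.pa n ≠ n := (hb.pa_spec h).2.1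

theorem pa_lt (hb : TreeBase le) {n : ℕ} (h : ¬ IsRoot le n) : hb.pa n < n :=
  lt_of_le_of_ne (hb.compat (hb.pa_le h)) (hb.pa_ne h)

theorem le_iff_pa (hb : TreeBase le) {n : ℕ} (h : ¬ IsRoot le n) (m : ℕ) :
    le m n ↔ m = n ∨ le m (hb.pa n) := by
  constructor
  · intro hm
    by_cases he : m = n
    · exact Or.inl he
    · exact Or.inr ((hb.pa_spec h).2.2 m hm he)
  · rintro (rfl | hm)
    · exact hb.refl m
    · exact hb.trans hm (hb.pa_le h)

theorem pa_immSucc (hb : TreeBase le) {k : ℕ} (h : ¬ IsRoot le k) : ImmSucc le (hb.pa k) k := by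
  refine ⟨hb.pa_le h, hb.pa_ne h, fun m h1 h2 => ?_⟩
  by_cases he : m = k
  · exact Or.inr he
  · exact Or.inl (hb.antisymm ((hb.pa_spec h).2.2 m h2 he) h1)

theorem immSucc_not_root (hb : TreeBase le) {a k : ℕ} (h : ImmSucc le a k) : ¬ IsRoot le k := by
  intro hr
  exact h.2.1 (hr a h.1)

theorem immSucc_pa (hb : TreeBase le) {a k : ℕ} (h : ImmSucc le a k) : hb.pa k = a := by
  have hnr := hb.immSucc_not_root h
  have h1 : le a (hb.pa k) := (hb.pa_spec hnr).2.2 a h.1 h.2.1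
  have h2 : le (hb.pa k) k := hb.pa_le hnr
  rcases h.2.2 (hb.pa k) h1 h2 with he | he
  · exact he
  · exact absurd he (hb.pa_ne hnr)

theorem immSucc_iff (hb : TreeBase le) {a k : ℕ} :
    ImmSucc le a k ↔ ¬ IsRoot le k ∧ hb.pa k = a := by
  constructor
  · intro h; exact ⟨hb.immSucc_not_root h, hb.immSucc_pa h⟩
  · rintro ⟨h, rfl⟩; exact hb.pa_immSucc h

end TreeBase

/-- Nice forest structure: S with roots R and parent function q. -/
structure NF (le : ℕ → ℕ → Prop) (S R : Set ℕ) (q : ℕ → ℕ) : Prop where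
  RS : R ⊆ S
  root_iff : ∀ r ∈ R, ∀ m ∈ S, (le m r ↔ m = r)
  qS : ∀ n ∈ S, n ∉ R → q n ∈ S
  q_le : ∀ n ∈ S, n ∉ R → le (q n) n
  q_lt : ∀ n ∈ S, n ∉ R → q n < n
  le_iff : ∀ n ∈ S, n ∉ R → ∀ m ∈ S, (le m n ↔ m = n ∨ le m (q n))
  ch_inf : ∀ n ∈ S, {k | k ∈ S ∧ k ∉ R ∧ q k = n}.Infinite

namespace NF

/-- For infinite subsets u v of ℕ there's an injection of u onto v. -/
theorem exists_bij_of_infinite {u v : Set ℕ} (hu : u.Infinite) (hv : v.Infinite) :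
    ∃ f : ℕ → ℕ, Set.InjOn f u ∧ f '' u = v := by
  classical
  haveI : Infinite u := hu.to_subtype
  haveI : Infinite v := hv.to_subtype
  haveI : Encodable u := Encodable.ofCountable _
  haveI : Encodable v := Encodable.ofCountable _
  haveI : Denumerable u := Denumerable.ofEncodableOfInfinite _
  haveI : Denumerable v := Denumerable.ofEncodableOfInfinite _
  set e : u ≃ v := (Denumerable.eqv u).trans (Denumerable.eqv v).symm
  refine ⟨fun x => if hx : x ∈ u then (e ⟨x, hx⟩ : ℕ) else x, ?_, ?_⟩
  · intro x hx y hy hxy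
    simp only [dif_pos hx, dif_pos hy] at hxy
    have := e.injective (Subtype.ext hxy)
    exact congrArg Subtype.val this
  · ext y
    constructor
    · rintro ⟨x, hx, rfl⟩
      simp only [dif_pos hx]
      exact (e ⟨x, hx⟩).2
    · intro hy
      refine ⟨(e.symm ⟨y, hy⟩ : ℕ), (e.symm ⟨y, hy⟩).2, ?_⟩
      simp only [dif_pos (e.symm ⟨y, hy⟩).2]
      congr 1
      rw [show (⟨(e.symm ⟨y, hy⟩ : ℕ), _⟩ : u) = e.symm ⟨y, hy⟩ from Subtype.ext rfl]
      rw [Equiv.apply_symm_apply]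

variable {le₁ le₂ : ℕ → ℕ → Prop} {S R S' R' : Set ℕ} {q₁ q₂ : ℕ → ℕ}

/-- fiber bijection chooser -/
noncomputable def fibMap (h1 : NF le₁ S R q₁) (h2 : NF le₂ S' R' q₂) (a b : ℕ) : ℕ → ℕ := by
  classical
  exact if h : a ∈ S ∧ b ∈ S' then
    (exists_bij_of_infinite (h1.ch_inf a h.1) (h2.ch_inf b h.2)).choose
  else id

theorem fibMap_spec (h1 : NF le₁ S R q₁) (h2 : NF le₂ S' R' q₂) {a b : ℕ}
    (ha : a ∈ S) (hb : b ∈ S') :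
    Set.InjOn (fibMap h1 h2 a b) {k | k ∈ S ∧ k ∉ R ∧ q₁ k = a} ∧
      fibMap h1 h2 a b '' {k | k ∈ S ∧ k ∉ R ∧ q₁ k = a} = {k | k ∈ S' ∧ k ∉ R' ∧ q₂ k = b} := by
  classical
  rw [fibMap, dif_pos ⟨ha, hb⟩]
  exact (exists_bij_of_infinite (h1.ch_inf a ha) (h2.ch_inf b hb)).choose_spec

open Classical in
noncomputable def buildG (h1 : NF le₁ S R q₁) (h2 : NF le₂ S' R' q₂) (e : ℕ → ℕ) (n : ℕ) : ℕ :=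
  if h : n ∈ S ∧ n ∉ R then fibMap h1 h2 (q₁ n) (buildG h1 h2 e (q₁ n)) n else e n
termination_by n
decreasing_by exact h1.q_lt n h.1 h.2

theorem buildG_root (h1 : NF le₁ S R q₁) (h2 : NF le₂ S' R' q₂) (e : ℕ → ℕ) {n : ℕ}
    (hn : n ∈ R) : buildG h1 h2 e n = e n := by
  classical
  rw [buildG]
  exact dif_neg (by tauto)

theorem buildG_nonroot (h1 : NF le₁ S R q₁) (h2 : NF le₂ S' R' q₂) (e : ℕ → ℕ) {n : ℕ}
    (hn : n ∈ S) (hn' : n ∉ R) :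
    buildG h1 h2 e n = fibMap h1 h2 (q₁ n) (buildG h1 h2 e (q₁ n)) n := by
  classical
  rw [buildG]
  exact dif_pos ⟨hn, hn'⟩

variable (h1 : NF le₁ S R q₁) (h2 : NF le₂ S' R' q₂) {e : ℕ → ℕ}

theorem buildG_mem (he : Set.InjOn e R) (heR : e '' R = R') :
    ∀ n ∈ S, (buildG h1 h2 e n ∈ S' ∧
      ((n ∈ R → buildG h1 h2 e n ∈ R') ∧
       (n ∉ R → buildG h1 h2 e n ∉ R' ∧ q₂ (buildG h1 h2 e n) = buildG h1 h2 e (q₁ n)))) := by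
  intro n
  induction n using Nat.strong_induction_on with
  | _ n ih =>
    intro hn
    by_cases hr : n ∈ R
    · rw [buildG_root h1 h2 e hr]
      have : e n ∈ R' := heR ▸ Set.mem_image_of_mem e hr
      exact ⟨h2.RS this, fun _ => this, fun h => absurd hr h⟩
    · rw [buildG_nonroot h1 h2 e hn hr]
      have hq : q₁ n ∈ S := h1.qS n hn hr
      have hih := ih (q₁ n) (h1.q_lt n hn hr) hq
      have hspec := fibMap_spec h1 h2 hq hih.1
      have himg : fibMap h1 h2 (q₁ n) (buildG h1 h2 e (q₁ n)) n ∈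
          {k | k ∈ S' ∧ k ∉ R' ∧ q₂ k = buildG h1 h2 e (q₁ n)} := by
        rw [← hspec.2]
        exact Set.mem_image_of_mem _ ⟨hn, hr, rfl⟩
      exact ⟨himg.1, fun h => absurd h hr, fun _ => ⟨himg.2.1, himg.2.2⟩⟩

theorem buildG_injOn (he : Set.InjOn e R) (heR : e '' R = R') :
    ∀ n ∈ S, ∀ m ∈ S, buildG h1 h2 e m = buildG h1 h2 e n → m = n := by
  intro n
  induction n using Nat.strong_induction_on with
  | _ n ih =>
    intro hn m hm heq
    by_cases hrn : n ∈ R <;> by_cases hrm : m ∈ R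
    · -- both roots
      rw [buildG_root h1 h2 e hrn, buildG_root h1 h2 e hrm] at heq
      exact he hrm hrn heq
    · -- n root, m not
      rw [buildG_root h1 h2 e hrn] at heq
      have h1m := (buildG_mem h1 h2 he heR m hm).2.2 hrm
      have h2n : e n ∈ R' := heR ▸ Set.mem_image_of_mem e hrn
      rw [heq] at h1m
      exact absurd h2n h1m.1
    · rw [buildG_root h1 h2 e hrm] at heq
      have h1n := (buildG_mem h1 h2 he heR n hn).2.2 hrn
      have h2m : e m ∈ R' := heR ▸ Set.mem_image_of_mem e hrm
      rw [← heq] at h1n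
      exact absurd h2m h1n.1
    · -- both nonroot
      have hqn := (buildG_mem h1 h2 he heR n hn).2.2 hrn
      have hqm := (buildG_mem h1 h2 he heR m hm).2.2 hrm
      have hq : buildG h1 h2 e (q₁ m) = buildG h1 h2 e (q₁ n) := by
        rw [← hqm.2, ← hqn.2, heq]
      have hqq : q₁ m = q₁ n :=
        ih (q₁ n) (h1.q_lt n hn hrn) (h1.qS n hn hrn) (q₁ m) (h1.qS m hm hrm) hq
      -- now both in the same fiber
      have hspec := fibMap_spec h1 h2 (h1.qS n hn hrn)
        (buildG_mem h1 h2 he heR (q₁ n) (h1.qS n hn hrn)).1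
      rw [buildG_nonroot h1 h2 e hn hrn, buildG_nonroot h1 h2 e hm hrm, hqq] at heq
      exact hspec.1 ⟨hm, hrm, hqq⟩ ⟨hn, hrn, rfl⟩ heq

theorem buildG_surjOn (he : Set.InjOn e R) (heR : e '' R = R') :
    ∀ k ∈ S', ∃ n ∈ S, buildG h1 h2 e n = k := by
  intro k
  induction k using Nat.strong_induction_on with
  | _ k ih =>
    intro hk
    by_cases hrk : k ∈ R'
    · obtain ⟨r, hr, hrk'⟩ := (Set.ext_iff.1 heR k).2 hrk
      exact ⟨r, h1.RS hr, by rw [buildG_root h1 h2 e hr]; exact hrk'⟩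
    · have hqk : q₂ k ∈ S' := h2.qS k hk hrk
      obtain ⟨a, ha, hak⟩ := ih (q₂ k) (h2.q_lt k hk hrk) hqk
      have hb' : buildG h1 h2 e a ∈ S' := by rw [hak]; exact hqk
      have hspec := fibMap_spec h1 h2 ha hb'
      have hkfib : k ∈ {x | x ∈ S' ∧ x ∉ R' ∧ q₂ x = buildG h1 h2 e a} := ⟨hk, hrk, by rw [hak]⟩
      rw [← hspec.2] at hkfib
      obtain ⟨m, hmfib, hmk⟩ := hkfib
      refine ⟨m, hmfib.1, ?_⟩
      rw [buildG_nonroot h1 h2 e hmfib.1 hmfib.2.1, hmfib.2.2]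
      exact hmk

theorem buildG_iff (he : Set.InjOn e R) (heR : e '' R = R') :
    ∀ n ∈ S, ∀ m ∈ S, (le₁ m n ↔ le₂ (buildG h1 h2 e m) (buildG h1 h2 e n)) := by
  intro n
  induction n using Nat.strong_induction_on with
  | _ n ih =>
    intro hn m hm
    have hgm := (buildG_mem h1 h2 he heR m hm).1
    have hgn := (buildG_mem h1 h2 he heR n hn).1
    by_cases hrn : n ∈ R
    · rw [h1.root_iff n hrn m hm]
      have : buildG h1 h2 e n ∈ R' := (buildG_mem h1 h2 he heR n hn).2.1 hrn
      rw [h2.root_iff _ this _ hgm]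
      constructor
      · rintro rfl; rfl
      · intro h; exact buildG_injOn h1 h2 he heR n hn m hm h
    · have hq := (buildG_mem h1 h2 he heR n hn).2.2 hrn
      rw [h1.le_iff n hn hrn m hm]
      rw [h2.le_iff _ hgn hq.1 _ hgm, hq.2]
      constructor
      · rintro (rfl | h)
        · exact Or.inl rfl
        · exact Or.inr ((ih (q₁ n) (h1.q_lt n hn hrn) (h1.qS n hn hrn) m hm).1 h)
      · rintro (h | h)
        · exact Or.inl (buildG_injOn h1 h2 he heR n hn m hm h)
        · exact Or.inr ((ih (q₁ n) (h1.q_lt n hn hrn) (h1.qS n hn hrn) m hm).2 h)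

/-- The master isomorphism theorem for nice forests. -/
theorem master (h1 : NF le₁ S R q₁) (h2 : NF le₂ S' R' q₂) (e : ℕ → ℕ)
    (he : Set.InjOn e R) (heR : e '' R = R') :
    ∃ g : ℕ → ℕ, Set.InjOn g S ∧ g '' S = S' ∧
      ∀ m ∈ S, ∀ n ∈ S, (le₁ m n ↔ le₂ (g m) (g n)) := by
  refine ⟨buildG h1 h2 e, ?_, ?_, ?_⟩
  · intro a ha b hb hab
    exact buildG_injOn h1 h2 he heR b hb a ha hab
  · ext k
    constructor
    · rintro ⟨a, ha, rfl⟩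
      exact (buildG_mem h1 h2 he heR a ha).1
    · intro hk
      obtain ⟨a, ha, hak⟩ := buildG_surjOn h1 h2 he heR k hk
      exact ⟨a, ha, hak⟩
  · intro m hm n hn
    exact buildG_iff h1 h2 he heR n hn m hm

end NF

section Part3
open TreeBase

variable {le le' : ℕ → ℕ → Prop}

def IsJTTree.base (hT : IsJTTree le) : TreeBase le :=
  ⟨hT.refl, hT.antisymm, hT.trans, hT.compat, hT.pred_finite, hT.pred_linear⟩

def IsDyadicTree.base (hD : IsDyadicTree le') : TreeBase le' :=
  ⟨hD.refl, hD.antisymm, hD.trans, hD.compat, hD.pred_finite, hD.pred_linear⟩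

theorem isRoot_zero (hb : TreeBase le) : IsRoot le 0 :=
  fun m hm => Nat.le_zero.1 (hb.compat hm)

/-- splitting an infinite set into two infinite pieces -/
theorem exists_split {s : Set ℕ} (hs : s.Infinite) :
    ∃ t, t ⊆ s ∧ t.Infinite ∧ (s \ t).Infinite := by
  classical
  haveI : Infinite s := hs.to_subtype
  haveI : Encodable s := Encodable.ofCountable _
  haveI : Denumerable s := Denumerable.ofEncodableOfInfinite _
  set e : ℕ ≃ s := (Denumerable.eqv s).symm
  have einj : Function.Injective (fun k => (e k : ℕ)) :=
    fun a b hab => e.injective (Subtype.ext hab)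
  refine ⟨Set.range (fun k => (e (2 * k) : ℕ)), ?_, ?_, ?_⟩
  · rintro x ⟨k, rfl⟩; exact (e (2 * k)).2
  · refine Set.infinite_of_injective_forall_mem (f := fun k => (e (2 * k) : ℕ)) ?_ ?_
    · intro a b hab
      have := einj hab
      omega
    · intro a; exact ⟨a, rfl⟩
  · refine Set.infinite_of_injective_forall_mem (f := fun k => (e (2 * k + 1) : ℕ)) ?_ ?_
    · intro a b hab
      have := einj hab
      omega
    · intro a
      refine ⟨(e (2 * a + 1)).2, ?_⟩
      rintro ⟨k, hk⟩
      have := einj hk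
      omega

/-- the set of children of `n` (as parent-fiber) -/
def fib (hb : TreeBase le) (n : ℕ) : Set ℕ := {k | ¬ IsRoot le k ∧ hb.pa k = n}

theorem fib_eq (hb : TreeBase le) (n : ℕ) : fib hb n = {k | ImmSucc le n k} := by
  ext k
  simp only [fib, Set.mem_setOf_eq, hb.immSucc_iff]

theorem fib_infinite (hT : IsJTTree le) (n : ℕ) : (fib hT.base n).Infinite := by
  rw [fib_eq]
  exact hT.succ_infinite n

/-- chosen "kept" children -/
noncomputable def Kn (hT : IsJTTree le) (n : ℕ) : Set ℕ :=
  (exists_split (fib_infinite hT n)).choose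

theorem Kn_spec (hT : IsJTTree le) (n : ℕ) :
    Kn hT n ⊆ fib hT.base n ∧ (Kn hT n).Infinite ∧ (fib hT.base n \ Kn hT n).Infinite :=
  (exists_split (fib_infinite hT n)).choose_spec

open Classical in
/-- membership in the "kept subtree" above 0 -/
noncomputable def S1mem (hT : IsJTTree le) (n : ℕ) : Prop :=
  if h : IsRoot le n then n = 0 else S1mem hT (hT.base.pa n) ∧ n ∈ Kn hT (hT.base.pa n)
termination_by n
decreasing_by exact hT.base.pa_lt h

theorem S1mem_zero (hT : IsJTTree le) : S1mem hT 0 := by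
  rw [S1mem]
  simp [isRoot_zero hT.base]

theorem S1mem_root (hT : IsJTTree le) {n : ℕ} (h : IsRoot le n) : S1mem hT n ↔ n = 0 := by
  rw [S1mem]; simp [h]

theorem S1mem_nonroot (hT : IsJTTree le) {n : ℕ} (h : ¬ IsRoot le n) :
    S1mem hT n ↔ S1mem hT (hT.base.pa n) ∧ n ∈ Kn hT (hT.base.pa n) := by
  rw [S1mem]; simp [h]

theorem S1mem_anc (hT : IsJTTree le) : ∀ n, S1mem hT n → ∀ m, le m n → S1mem hT m := by
  intro n
  induction n using Nat.strong_induction_on with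
  | _ n ih =>
    intro hn m hm
    by_cases h : IsRoot le n
    · rw [h m hm]; exact hn
    · by_cases he : m = n
      · subst he; exact hn
      · have := ((hT.base.le_iff_pa h m).1 hm).resolve_left he
        exact ih _ (hT.base.pa_lt h) ((S1mem_nonroot hT h).1 hn).1 m this

theorem nf_S1 (hT : IsJTTree le) :
    NF le {n | S1mem hT n} {0} hT.base.pa := by
  constructor
  · intro r hr; rw [Set.mem_singleton_iff] at hr; subst hr
    exact S1mem_zero hT
  · intro r hr m _; rw [Set.mem_singleton_iff] at hr; subst hr
    constructor
    · intro h; exact isRoot_zero hT.base m h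
    · rintro rfl; exact hT.refl _
  · intro n hn hn'
    rw [Set.mem_singleton_iff] at hn'
    have h : ¬ IsRoot le n := by
      intro h; exact hn' ((S1mem_root hT h).1 hn)
    exact ((S1mem_nonroot hT h).1 hn).1
  · intro n hn hn'
    rw [Set.mem_singleton_iff] at hn'
    have h : ¬ IsRoot le n := fun h => hn' ((S1mem_root hT h).1 hn)
    exact hT.base.pa_le h
  · intro n hn hn'
    rw [Set.mem_singleton_iff] at hn'
    have h : ¬ IsRoot le n := fun h => hn' ((S1mem_root hT h).1 hn)
    exact hT.base.pa_lt h
  · intro n hn hn' m _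
    rw [Set.mem_singleton_iff] at hn'
    have h : ¬ IsRoot le n := fun h => hn' ((S1mem_root hT h).1 hn)
    exact hT.base.le_iff_pa h m
  · intro n hn
    apply Set.Infinite.mono (s := Kn hT n) ?_ (Kn_spec hT n).2.1
    intro k hk
    have hkf := (Kn_spec hT n).1 hk
    obtain ⟨hknr, hkpa⟩ := hkf
    refine ⟨?_, ?_, hkpa⟩
    · rw [Set.mem_setOf_eq, S1mem_nonroot hT hknr, hkpa]
      exact ⟨hn, hk⟩
    · rw [Set.mem_singleton_iff]
      intro h; subst h
      exact hknr (isRoot_zero hT.base)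

theorem nf_S2 (hT : IsJTTree le) :
    NF le {n | ¬ S1mem hT n}
      {n | ¬ S1mem hT n ∧ (IsRoot le n ∨ S1mem hT (hT.base.pa n))} hT.base.pa ∧
    {n | ¬ S1mem hT n ∧ (IsRoot le n ∨ S1mem hT (hT.base.pa n))}.Infinite := by
  constructor
  · constructor
    · intro r hr; exact hr.1
    · intro r hr m hm
      constructor
      · intro h
        rcases hr.2 with hroot | hpa
        · exact hroot m h
        · by_cases he : m = r
          · exact he
          · have hnr : ¬ IsRoot le r := by
              intro hroot; exact he (hroot m h)
            have := ((hT.base.le_iff_pa hnr m).1 h).resolve_left he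
            exact absurd (S1mem_anc hT _ hpa m this) hm
      · rintro rfl; exact hT.refl _
    · intro n hn hn'
      simp only [Set.mem_setOf_eq] at hn hn' ⊢
      push_neg at hn'
      intro h
      exact (hn' hn).2 h
    · intro n hn hn'
      simp only [Set.mem_setOf_eq] at hn hn'
      push_neg at hn'
      exact hT.base.pa_le (fun h => (hn' hn).1 h)
    · intro n hn hn'
      simp only [Set.mem_setOf_eq] at hn hn'
      push_neg at hn'
      exact hT.base.pa_lt (fun h => (hn' hn).1 h)
    · intro n hn hn' m _
      simp only [Set.mem_setOf_eq] at hn hn'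
      push_neg at hn'
      exact hT.base.le_iff_pa (fun h => (hn' hn).1 h) m
    · intro n hn
      apply Set.Infinite.mono (s := fib hT.base n) ?_ (fib_infinite hT n)
      intro k hk
      obtain ⟨hknr, hkpa⟩ := hk
      have hkS2 : ¬ S1mem hT k := by
        rw [S1mem_nonroot hT hknr, hkpa]
        intro h; exact hn h.1
      refine ⟨hkS2, ?_, hkpa⟩
      simp only [Set.mem_setOf_eq]
      push_neg
      intro _
      constructor
      · exact hknr
      · rw [hkpa]; exact hn
  · apply Set.Infinite.mono (s := fib hT.base 0 \ Kn hT 0) ?_ (Kn_spec hT 0).2.2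
    rintro k ⟨⟨hknr, hkpa⟩, hknk⟩
    have hkS2 : ¬ S1mem hT k := by
      rw [S1mem_nonroot hT hknr, hkpa]
      intro h; exact hknk h.2
    exact ⟨hkS2, Or.inr (by rw [hkpa]; exact S1mem_zero hT)⟩

end Part3

section Part3D
open TreeBase

variable {le' : ℕ → ℕ → Prop}

noncomputable def rD (hD : IsDyadicTree le') : ℕ := hD.root.choose

theorem rD_le (hD : IsDyadicTree le') : ∀ n, le' (rD hD) n := hD.root.choose_spec

theorem isRoot_iff_rD (hD : IsDyadicTree le') (n : ℕ) : IsRoot le' n ↔ n = rD hD := by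
  constructor
  · intro h; exact (h _ (rD_le hD n)).symm
  · rintro rfl
    intro m hm
    exact hD.antisymm hm (rD_le hD m)

noncomputable def aF (hD : IsDyadicTree le') (n : ℕ) : ℕ := (hD.succ_two n).choose

noncomputable def bF (hD : IsDyadicTree le') (n : ℕ) : ℕ :=
  (hD.succ_two n).choose_spec.choose

theorem abF_spec (hD : IsDyadicTree le') (n : ℕ) :
    aF hD n ≠ bF hD n ∧ {k | ImmSucc le' n k} = {aF hD n, bF hD n} :=
  (hD.succ_two n).choose_spec.choose_spec

theorem immSucc_aF (hD : IsDyadicTree le') (n : ℕ) : ImmSucc le' n (aF hD n) := by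
  have h := (abF_spec hD n).2
  have : aF hD n ∈ ({aF hD n, bF hD n} : Set ℕ) := by left; rfl
  rw [← h] at this; exact this

theorem immSucc_bF (hD : IsDyadicTree le') (n : ℕ) : ImmSucc le' n (bF hD n) := by
  have h := (abF_spec hD n).2
  have : bF hD n ∈ ({aF hD n, bF hD n} : Set ℕ) := by right; rfl
  rw [← h] at this; exact this

theorem pa_aF (hD : IsDyadicTree le') (n : ℕ) : hD.base.pa (aF hD n) = n :=
  hD.base.immSucc_pa (immSucc_aF hD n)

theorem pa_bF (hD : IsDyadicTree le') (n : ℕ) : hD.base.pa (bF hD n) = n :=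
  hD.base.immSucc_pa (immSucc_bF hD n)

theorem aF_not_root (hD : IsDyadicTree le') (n : ℕ) : ¬ IsRoot le' (aF hD n) :=
  hD.base.immSucc_not_root (immSucc_aF hD n)

theorem bF_not_root (hD : IsDyadicTree le') (n : ℕ) : ¬ IsRoot le' (bF hD n) :=
  hD.base.immSucc_not_root (immSucc_bF hD n)

theorem lt_aF (hD : IsDyadicTree le') (n : ℕ) : n < aF hD n :=
  lt_of_le_of_ne (hD.compat (immSucc_aF hD n).1) (immSucc_aF hD n).2.1

theorem lt_bF (hD : IsDyadicTree le') (n : ℕ) : n < bF hD n :=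
  lt_of_le_of_ne (hD.compat (immSucc_bF hD n).1) (immSucc_bF hD n).2.1

/-- the "spine" set: nodes that are b-children -/
def T2 (hD : IsDyadicTree le') : Set ℕ :=
  {k | ¬ IsRoot le' k ∧ k = bF hD (hD.base.pa k)}

theorem rD_not_T2 (hD : IsDyadicTree le') : rD hD ∉ T2 hD := by
  intro h
  exact h.1 ((isRoot_iff_rD hD _).2 rfl)

theorem aF_not_T2 (hD : IsDyadicTree le') (n : ℕ) : aF hD n ∉ T2 hD := by
  intro h
  obtain ⟨h1, h2⟩ := h
  rw [pa_aF hD n] at h2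
  exact (abF_spec hD n).1 h2

theorem bF_T2 (hD : IsDyadicTree le') (n : ℕ) : bF hD n ∈ T2 hD :=
  ⟨bF_not_root hD n, by rw [pa_bF hD n]⟩

theorem child_cases (hD : IsDyadicTree le') {k : ℕ} (h : ¬ IsRoot le' k) :
    k = aF hD (hD.base.pa k) ∨ k = bF hD (hD.base.pa k) := by
  have h1 : ImmSucc le' (hD.base.pa k) k := hD.base.pa_immSucc h
  have h2 := (abF_spec hD (hD.base.pa k)).2
  have : k ∈ {k' | ImmSucc le' (hD.base.pa k) k'} := h1
  rw [h2] at this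
  exact this

theorem mem_T2_compl (hD : IsDyadicTree le') {k : ℕ} :
    k ∉ T2 hD ↔ IsRoot le' k ∨ (¬ IsRoot le' k ∧ k = aF hD (hD.base.pa k)) := by
  constructor
  · intro h
    by_cases hr : IsRoot le' k
    · exact Or.inl hr
    · refine Or.inr ⟨hr, ?_⟩
      rcases child_cases hD hr with h1 | h1
      · exact h1
      · exact absurd ⟨hr, h1⟩ h
  · rintro (hr | ⟨hr, hk⟩) ⟨h1, h2⟩
    · exact h1 hr
    · exact (abF_spec hD (hD.base.pa k)).1 (hk.symm.trans h2)

open Classical in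
/-- first strict ancestor belonging to P -/
noncomputable def paIn (hb : TreeBase le') (P : Set ℕ) (k : ℕ) : ℕ :=
  if h : IsRoot le' k then k
  else if hb.pa k ∈ P then hb.pa k else paIn hb P (hb.pa k)
termination_by k
decreasing_by exact hb.pa_lt h

theorem paIn_nonroot_mem (hb : TreeBase le') (P : Set ℕ) {k : ℕ} (h : ¬ IsRoot le' k)
    (hm : hb.pa k ∈ P) : paIn hb P k = hb.pa k := by
  classical
  rw [paIn]
  rw [dif_neg h, if_pos hm]

theorem paIn_nonroot_nmem (hb : TreeBase le') (P : Set ℕ) {k : ℕ} (h : ¬ IsRoot le' k)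
    (hm : hb.pa k ∉ P) : paIn hb P k = paIn hb P (hb.pa k) := by
  classical
  rw [paIn]
  rw [dif_neg h, if_neg hm]

theorem paIn_spec (hb : TreeBase le') (P : Set ℕ) :
    ∀ k, ¬ IsRoot le' k → ∀ m ∈ P, le' m k → m ≠ k →
      (paIn hb P k ∈ P ∧ le' (paIn hb P k) k ∧ paIn hb P k < k ∧ le' m (paIn hb P k)) := by
  intro k
  induction k using Nat.strong_induction_on with
  | _ k ih =>
    intro hk m hmP hmk hne
    have hmpa : le' m (hb.pa k) := ((hb.le_iff_pa hk m).1 hmk).resolve_left hne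
    by_cases hp : hb.pa k ∈ P
    · rw [paIn_nonroot_mem hb P hk hp]
      exact ⟨hp, hb.pa_le hk, hb.pa_lt hk, hmpa⟩
    · rw [paIn_nonroot_nmem hb P hk hp]
      have hmne : m ≠ hb.pa k := fun h => hp (h ▸ hmP)
      have hpnr : ¬ IsRoot le' (hb.pa k) := by
        intro hroot
        exact hmne (hroot m hmpa)
      obtain ⟨h1, h2, h3, h4⟩ := ih (hb.pa k) (hb.pa_lt hk) hpnr m hmP hmpa hmne
      exact ⟨h1, hb.trans h2 (hb.pa_le hk), lt_trans h3 (hb.pa_lt hk), h4⟩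

end Part3D

section Part3E
open TreeBase

variable {le le' : ℕ → ℕ → Prop}

noncomputable def bIter (hD : IsDyadicTree le') (j n : ℕ) : ℕ := (bF hD)^[j] n
noncomputable def aIter (hD : IsDyadicTree le') (j n : ℕ) : ℕ := (aF hD)^[j] n

theorem bIter_succ (hD : IsDyadicTree le') (j n : ℕ) :
    bIter hD (j + 1) n = bF hD (bIter hD j n) := Function.iterate_succ_apply' _ _ _

theorem aIter_succ (hD : IsDyadicTree le') (j n : ℕ) :
    aIter hD (j + 1) n = aF hD (aIter hD j n) := Function.iterate_succ_apply' _ _ _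

theorem bIter_zero (hD : IsDyadicTree le') (n : ℕ) : bIter hD 0 n = n := rfl
theorem aIter_zero (hD : IsDyadicTree le') (n : ℕ) : aIter hD 0 n = n := rfl

theorem bIter_mono (hD : IsDyadicTree le') (n : ℕ) : StrictMono (fun j => bIter hD j n) :=
  strictMono_nat_of_lt_succ (fun j => by rw [bIter_succ]; exact lt_bF hD _)

theorem aIter_mono (hD : IsDyadicTree le') (n : ℕ) : StrictMono (fun j => aIter hD j n) :=
  strictMono_nat_of_lt_succ (fun j => by rw [aIter_succ]; exact lt_aF hD _)

theorem le_bIter (hD : IsDyadicTree le') (n : ℕ) : ∀ j, le' n (bIter hD j n)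
  | 0 => hD.refl n
  | (j + 1) => by
      rw [bIter_succ]
      exact hD.trans (le_bIter hD n j) (immSucc_bF hD _).1

theorem le_aIter (hD : IsDyadicTree le') (n : ℕ) : ∀ j, le' n (aIter hD j n)
  | 0 => hD.refl n
  | (j + 1) => by
      rw [aIter_succ]
      exact hD.trans (le_aIter hD n j) (immSucc_aF hD _).1

theorem paIn_T1_bIter (hD : IsDyadicTree le') {n : ℕ} (hn : n ∈ (T2 hD)ᶜ) :
    ∀ j, paIn hD.base (T2 hD)ᶜ (bIter hD (j + 1) n) = n := by
  intro j
  induction j with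
  | zero =>
    rw [bIter_succ, bIter_zero]
    rw [paIn_nonroot_mem hD.base _ (bF_not_root hD n) (by rw [pa_bF]; exact hn), pa_bF]
  | succ j ih =>
    rw [bIter_succ]
    rw [paIn_nonroot_nmem hD.base _ (bF_not_root hD _)
      (by rw [pa_bF]; intro hc; exact hc (bIter_succ hD j n ▸ bF_T2 hD (bIter hD j n))), pa_bF]
    exact ih

theorem paIn_T1_aF_bIter (hD : IsDyadicTree le') {n : ℕ} (hn : n ∈ (T2 hD)ᶜ) :
    ∀ j, paIn hD.base (T2 hD)ᶜ (aF hD (bIter hD j n)) = n := by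
  intro j
  cases j with
  | zero =>
    rw [bIter_zero]
    rw [paIn_nonroot_mem hD.base _ (aF_not_root hD n) (by rw [pa_aF]; exact hn), pa_aF]
  | succ j =>
    rw [paIn_nonroot_nmem hD.base _ (aF_not_root hD _)
      (by rw [pa_aF]; intro hc; exact hc (bIter_succ hD j n ▸ bF_T2 hD (bIter hD j n))), pa_aF]
    exact paIn_T1_bIter hD hn j

theorem paIn_T2_aIter (hD : IsDyadicTree le') {n : ℕ} (hn : n ∈ T2 hD) :
    ∀ j, paIn hD.base (T2 hD) (aIter hD (j + 1) n) = n := by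
  intro j
  induction j with
  | zero =>
    rw [aIter_succ, aIter_zero]
    rw [paIn_nonroot_mem hD.base _ (aF_not_root hD n) (by rw [pa_aF]; exact hn), pa_aF]
  | succ j ih =>
    rw [aIter_succ]
    rw [paIn_nonroot_nmem hD.base _ (aF_not_root hD _)
      (by rw [pa_aF]; exact (aIter_succ hD j n ▸ aF_not_T2 hD (aIter hD j n))), pa_aF]
    exact ih

theorem paIn_T2_bF_aIter (hD : IsDyadicTree le') {n : ℕ} (hn : n ∈ T2 hD) :
    ∀ j, paIn hD.base (T2 hD) (bF hD (aIter hD j n)) = n := by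
  intro j
  cases j with
  | zero =>
    rw [aIter_zero]
    rw [paIn_nonroot_mem hD.base _ (bF_not_root hD n) (by rw [pa_bF]; exact hn), pa_bF]
  | succ j =>
    rw [paIn_nonroot_nmem hD.base _ (bF_not_root hD _)
      (by rw [pa_bF]; exact (aIter_succ hD j n ▸ aF_not_T2 hD (aIter hD j n))), pa_bF]
    exact paIn_T2_aIter hD hn j

theorem nf_T1 (hD : IsDyadicTree le') :
    NF le' (T2 hD)ᶜ {rD hD} (paIn hD.base (T2 hD)ᶜ) := by
  have hrT1 : rD hD ∈ (T2 hD)ᶜ := rD_not_T2 hD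
  have key : ∀ n ∈ (T2 hD)ᶜ, n ∉ ({rD hD} : Set ℕ) →
      paIn hD.base (T2 hD)ᶜ n ∈ (T2 hD)ᶜ ∧ le' (paIn hD.base (T2 hD)ᶜ n) n ∧
        paIn hD.base (T2 hD)ᶜ n < n ∧ le' (rD hD) (paIn hD.base (T2 hD)ᶜ n) := by
    intro n hn hn'
    rw [Set.mem_singleton_iff] at hn'
    have hnr : ¬ IsRoot le' n := by rw [isRoot_iff_rD hD]; exact hn'
    exact paIn_spec hD.base _ n hnr (rD hD) hrT1 (rD_le hD n) (Ne.symm hn')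
  constructor
  · intro r hr; rw [Set.mem_singleton_iff] at hr; subst hr; exact hrT1
  · intro r hr m _; rw [Set.mem_singleton_iff] at hr; subst hr
    exact ⟨fun h => hD.antisymm h (rD_le hD m), fun h => h ▸ hD.refl m⟩
  · intro n hn hn'; exact (key n hn hn').1
  · intro n hn hn'; exact (key n hn hn').2.1
  · intro n hn hn'; exact (key n hn hn').2.2.1
  · intro n hn hn' m hm
    rw [Set.mem_singleton_iff] at hn'
    have hnr : ¬ IsRoot le' n := by rw [isRoot_iff_rD hD]; exact hn'
    constructor
    · intro h
      by_cases he : m = n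
      · exact Or.inl he
      · exact Or.inr (paIn_spec hD.base _ n hnr m hm h he).2.2.2
    · rintro (rfl | h)
      · exact hD.refl _
      · exact hD.trans h (key n hn (Set.mem_singleton_iff.not.2 hn')).2.1
  · intro n hn
    refine Set.infinite_of_injective_forall_mem
      (f := fun j => aF hD (bIter hD j n)) ?_ ?_
    · intro i j hij
      have hij' : aF hD (bIter hD i n) = aF hD (bIter hD j n) := hij
      have : hD.base.pa (aF hD (bIter hD i n)) = hD.base.pa (aF hD (bIter hD j n)) :=
        congrArg _ hij'
      rw [pa_aF, pa_aF] at this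
      exact (bIter_mono hD n).injective this
    · intro j
      refine ⟨aF_not_T2 hD _, ?_, paIn_T1_aF_bIter hD hn j⟩
      rw [Set.mem_singleton_iff]
      intro h
      exact aF_not_root hD _ (h ▸ (isRoot_iff_rD hD (rD hD)).2 rfl)

def R2' (hD : IsDyadicTree le') : Set ℕ :=
  {k | k ∈ T2 hD ∧ ∀ m, le' m k → m ≠ k → m ∉ T2 hD}

theorem nf_T2 (hD : IsDyadicTree le') :
    NF le' (T2 hD) (R2' hD) (paIn hD.base (T2 hD)) := by
  have key : ∀ n ∈ T2 hD, n ∉ R2' hD →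
      paIn hD.base (T2 hD) n ∈ T2 hD ∧ le' (paIn hD.base (T2 hD) n) n ∧
        paIn hD.base (T2 hD) n < n := by
    intro n hn hn'
    rw [R2', Set.mem_setOf_eq] at hn'
    push_neg at hn'
    obtain ⟨m, hm1, hm2, hm3⟩ := hn' hn
    have hnr : ¬ IsRoot le' n := hn.1
    obtain ⟨h1, h2, h3, _⟩ := paIn_spec hD.base _ n hnr m hm3 hm1 hm2
    exact ⟨h1, h2, h3⟩
  constructor
  · intro r hr; exact hr.1
  · intro r hr m hm
    constructor
    · intro h
      by_cases he : m = r
      · exact he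
      · exact absurd hm (hr.2 m h he)
    · rintro rfl; exact hD.refl m
  · intro n hn hn'; exact (key n hn hn').1
  · intro n hn hn'; exact (key n hn hn').2.1
  · intro n hn hn'; exact (key n hn hn').2.2
  · intro n hn hn' m hm
    have hnr : ¬ IsRoot le' n := hn.1
    constructor
    · intro h
      by_cases he : m = n
      · exact Or.inl he
      · exact Or.inr (paIn_spec hD.base _ n hnr m hm h he).2.2.2
    · rintro (rfl | h)
      · exact hD.refl _
      · exact hD.trans h (key n hn hn').2.1
  · intro n hn
    refine Set.infinite_of_injective_forall_mem
      (f := fun j => bF hD (aIter hD j n)) ?_ ?_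
    · intro i j hij
      have hij' : bF hD (aIter hD i n) = bF hD (aIter hD j n) := hij
      have : hD.base.pa (bF hD (aIter hD i n)) = hD.base.pa (bF hD (aIter hD j n)) :=
        congrArg _ hij'
      rw [pa_bF, pa_bF] at this
      exact (aIter_mono hD n).injective this
    · intro j
      refine ⟨bF_T2 hD _, ?_, paIn_T2_bF_aIter hD hn j⟩
      intro hR
      have hlt : n < bF hD (aIter hD j n) :=
        lt_of_le_of_lt (hD.compat (le_aIter hD n j)) (lt_bF hD _)
      exact hR.2 n (hD.trans (le_aIter hD n j) (immSucc_bF hD _).1) (Nat.ne_of_lt hlt) hn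

theorem anc_aIter_rD (hD : IsDyadicTree le') :
    ∀ j m, le' m (aIter hD j (rD hD)) → m ∉ T2 hD := by
  intro j
  induction j with
  | zero =>
    intro m hm
    have : m = rD hD := hD.antisymm hm (rD_le hD m)
    subst this
    exact rD_not_T2 hD
  | succ j ih =>
    intro m hm
    rw [aIter_succ] at hm
    rcases (hD.base.le_iff_pa (aF_not_root hD _) m).1 hm with he | hle
    · subst he; exact aF_not_T2 hD _
    · rw [pa_aF] at hle
      exact ih m hle

theorem R2'_infinite (hD : IsDyadicTree le') : (R2' hD).Infinite := by
  refine Set.infinite_of_injective_forall_mem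
    (f := fun j => bF hD (aIter hD j (rD hD))) ?_ ?_
  · intro i j hij
    have hij' : bF hD (aIter hD i (rD hD)) = bF hD (aIter hD j (rD hD)) := hij
    have : hD.base.pa (bF hD (aIter hD i (rD hD))) = hD.base.pa (bF hD (aIter hD j (rD hD))) :=
      congrArg _ hij'
    rw [pa_bF, pa_bF] at this
    exact (aIter_mono hD _).injective this
  · intro j
    refine ⟨bF_T2 hD _, ?_⟩
    intro m hm hne
    rcases (hD.base.le_iff_pa (bF_not_root hD _) m).1 hm with he | hle
    · exact absurd he hne
    · rw [pa_bF] at hle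
      exact anc_aIter_rD hD j m hle

/-- The combinatorial heart: an order-compatible pairing of the two trees. -/
theorem exists_good_equiv (hT : IsJTTree le) (hD : IsDyadicTree le') :
    ∃ (e : ℕ ≃ ℕ) (S : Set ℕ),
      (∀ m ∈ S, ∀ n ∈ S, (le m n ↔ le' (e m) (e n))) ∧
      (∀ m ∉ S, ∀ n ∉ S, (le m n ↔ le' (e m) (e n))) := by
  classical
  obtain ⟨nf2, hR2inf⟩ := nf_S2 hT
  obtain ⟨g₁, hg₁inj, hg₁im, hg₁iff⟩ := NF.master (nf_S1 hT) (nf_T1 hD)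
    (fun _ => rD hD) (fun a ha b hb _ => by rw [Set.mem_singleton_iff] at ha hb; rw [ha, hb]) (by simp)
  obtain ⟨e₂, he₂inj, he₂im⟩ := NF.exists_bij_of_infinite hR2inf (R2'_infinite hD)
  obtain ⟨g₂, hg₂inj, hg₂im, hg₂iff⟩ := NF.master nf2 (nf_T2 hD) e₂ he₂inj he₂im
  set S : Set ℕ := {n | S1mem hT n} with hS
  set g : ℕ → ℕ := fun n => if S1mem hT n then g₁ n else g₂ n with hg
  have hgdef1 : ∀ n, S1mem hT n → g n = g₁ n := fun n h => if_pos h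
  have hgdef2 : ∀ n, ¬ S1mem hT n → g n = g₂ n := fun n h => if_neg h
  have hmem1 : ∀ n ∈ S, g n ∈ (T2 hD)ᶜ := by
    intro n hn
    rw [hgdef1 n hn]
    exact hg₁im ▸ Set.mem_image_of_mem g₁ hn
  have hmem2 : ∀ n, n ∉ S → g n ∈ T2 hD := by
    intro n hn
    rw [hgdef2 n hn]
    exact hg₂im ▸ Set.mem_image_of_mem g₂ hn
  have hbij : Function.Bijective g := by
    constructor
    · intro x y hxy
      by_cases hx : x ∈ S <;> by_cases hy : y ∈ S
      · refine hg₁inj hx hy ?_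
        rw [← hgdef1 x hx, ← hgdef1 y hy, hxy]
      · exact absurd (hxy ▸ hmem1 x hx) (by simpa using hmem2 y hy)
      · exact absurd (hxy ▸ hmem2 x hx) (by simpa using hmem1 y hy)
      · refine hg₂inj hx hy ?_
        rw [← hgdef2 x hx, ← hgdef2 y hy, hxy]
    · intro k
      by_cases hk : k ∈ T2 hD
      · obtain ⟨n, hn, rfl⟩ := hg₂im ▸ hk
        exact ⟨n, hgdef2 n hn⟩
      · obtain ⟨n, hn, rfl⟩ := hg₁im ▸ (Set.mem_compl hk)
        exact ⟨n, hgdef1 n hn⟩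
  refine ⟨Equiv.ofBijective g hbij, S, ?_, ?_⟩
  · intro m hm n hn
    have h1 : Equiv.ofBijective g hbij m = g₁ m := hgdef1 m hm
    have h2 : Equiv.ofBijective g hbij n = g₁ n := hgdef1 n hn
    rw [h1, h2]
    exact hg₁iff m hm n hn
  · intro m hm n hn
    have h1 : Equiv.ofBijective g hbij m = g₂ m := hgdef2 m hm
    have h2 : Equiv.ofBijective g hbij n = g₂ n := hgdef2 n hn
    rw [h1, h2]
    exact hg₂iff m hm n hn

end Part3E

section Analytic
open scoped NNReal

variable {le le' : ℕ → ℕ → Prop} {p : ℝ}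

/-- the candidate set whose sup is the JT norm -/
def candSet (le : ℕ → ℕ → Prop) (p : ℝ) (x : ℕ → ℝ) : Set ℝ :=
  { r : ℝ | ∃ (n : ℕ) (s : Fin n → Set ℕ),
    (∀ k, IsSegment le (s k)) ∧
    (∀ k l, k ≠ l → Disjoint (s k) (s l)) ∧
    r = (∑ k : Fin n, segNorm x (s k) ^ p) ^ (1 / p) }

theorem jtNorm_eq (le : ℕ → ℕ → Prop) (p : ℝ) (x : ℕ → ℝ) :
    jtNorm le p x = sSup (candSet le p x) := rfl

theorem zero_mem_candSet (hp : 0 < p) (x : ℕ → ℝ) : (0:ℝ) ∈ candSet le p x := by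
  refine ⟨0, Fin.elim0, fun k => k.elim0, fun k => k.elim0, ?_⟩
  rw [Finset.univ_eq_empty, Finset.sum_empty, Real.zero_rpow]
  positivity

/-- finite quadratic sum over a segment -/
noncomputable def SqS (f : ℕ →₀ ℝ) (s : Set ℕ) : ℝ :=
  ∑ i ∈ f.support, s.indicator (fun j => (f j) ^ 2) i

theorem SqS_nonneg (f : ℕ →₀ ℝ) (s : Set ℕ) : 0 ≤ SqS f s := by
  apply Finset.sum_nonneg
  intro i _
  apply Set.indicator_nonneg
  intro j _
  positivity

theorem segNorm_eq (f : ℕ →₀ ℝ) (s : Set ℕ) : segNorm (f : ℕ → ℝ) s = Real.sqrt (SqS f s) := by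
  rw [segNorm, SqS]
  congr 1
  refine tsum_eq_sum ?_
  intro i hi
  rw [Finsupp.notMem_support_iff] at hi
  by_cases h : i ∈ s
  · rw [Set.indicator_of_mem h]; simp [hi]
  · rw [Set.indicator_of_notMem h]

theorem segNorm_nonneg' (f : ℕ →₀ ℝ) (s : Set ℕ) : 0 ≤ segNorm (f : ℕ → ℝ) s := by
  rw [segNorm_eq]; exact Real.sqrt_nonneg _

/-- sum of SqS over a disjoint family -/
theorem SqS_disjoint_sum (f : ℕ →₀ ℝ) {n : ℕ} (s : Fin n → Set ℕ)
    (hdisj : ∀ k l, k ≠ l → Disjoint (s k) (s l)) :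
    ∑ k : Fin n, SqS f (s k) ≤ ∑ i ∈ f.support, (f i) ^ 2 := by
  classical
  have hcomm : ∑ k : Fin n, SqS f (s k) =
      ∑ i ∈ f.support, ∑ k : Fin n, (s k).indicator (fun j => (f j) ^ 2) i := by
    simp only [SqS]
    exact Finset.sum_comm
  rw [hcomm]
  apply Finset.sum_le_sum
  intro i _
  by_cases hex : ∃ k, i ∈ s k
  · obtain ⟨k, hk⟩ := hex
    rw [Finset.sum_eq_single k]
    · rw [Set.indicator_of_mem hk]
    · intro l _ hlk
      have : i ∉ s l := fun hc => (hdisj l k hlk).le_bot ⟨hc, hk⟩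
      rw [Set.indicator_of_notMem this]
    · intro h; exact absurd (Finset.mem_univ k) h
  · push_neg at hex
    have : ∀ k : Fin n, (s k).indicator (fun j => (f j) ^ 2) i = 0 :=
      fun k => Set.indicator_of_notMem (hex k) _
    rw [Finset.sum_congr rfl (fun k _ => this k), Finset.sum_const, smul_zero]
    positivity

/-- power sum inequality: for q ≥ 1, `∑ aᵢ^q ≤ (∑ aᵢ)^q` -/
theorem sum_rpow_le_rpow_sum {q : ℝ} (hq : 1 ≤ q) {ι : Type*} (s : Finset ι)
    (a : ι → ℝ) (ha : ∀ i ∈ s, 0 ≤ a i) :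
    ∑ i ∈ s, a i ^ q ≤ (∑ i ∈ s, a i) ^ q := by
  classical
  induction s using Finset.induction_on with
  | empty =>
    simp only [Finset.sum_empty]
    rw [Real.zero_rpow (by positivity)]
  | @insert x s hx ih =>
    rw [Finset.sum_insert hx, Finset.sum_insert hx]
    have hx0 : 0 ≤ a x := ha x (Finset.mem_insert_self _ _)
    have hs0 : 0 ≤ ∑ i ∈ s, a i :=
      Finset.sum_nonneg (fun i hi => ha i (Finset.mem_insert_of_mem hi))
    have h1 : ∑ i ∈ s, a i ^ q ≤ (∑ i ∈ s, a i) ^ q :=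
      ih (fun i hi => ha i (Finset.mem_insert_of_mem hi))
    have h2 : a x ^ q + (∑ i ∈ s, a i) ^ q ≤ (a x + ∑ i ∈ s, a i) ^ q := by
      have h := NNReal.add_rpow_le_rpow_add ((a x).toNNReal) ((∑ i ∈ s, a i).toNNReal) hq
      have h' := NNReal.coe_le_coe.2 h
      push_cast at h'
      rwa [Real.coe_toNNReal _ hx0, Real.coe_toNNReal _ hs0] at h'
    linarith

theorem cand_le (hp : 2 < p) (f : ℕ →₀ ℝ) :
    ∀ r ∈ candSet le p (f : ℕ → ℝ), r ≤ Real.sqrt (∑ i ∈ f.support, (f i) ^ 2) := by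
  rintro r ⟨n, s, hseg, hdisj, rfl⟩
  have hp0 : (0:ℝ) < p := by linarith
  have key : ∑ k : Fin n, segNorm (f : ℕ → ℝ) (s k) ^ p ≤
      (∑ i ∈ f.support, (f i) ^ 2) ^ (p / 2) := by
    have h1 : ∀ k : Fin n, segNorm (f : ℕ → ℝ) (s k) ^ p = SqS f (s k) ^ (p / 2) := by
      intro k
      rw [segNorm_eq, Real.sqrt_eq_rpow, ← Real.rpow_mul (SqS_nonneg f (s k))]
      congr 1
      ring
    calc ∑ k : Fin n, segNorm (f : ℕ → ℝ) (s k) ^ p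
        = ∑ k : Fin n, SqS f (s k) ^ (p / 2) := by
          exact Finset.sum_congr rfl (fun k _ => h1 k)
      _ ≤ (∑ k : Fin n, SqS f (s k)) ^ (p / 2) :=
          sum_rpow_le_rpow_sum (by linarith) _ _ (fun k _ => SqS_nonneg f (s k))
      _ ≤ (∑ i ∈ f.support, (f i) ^ 2) ^ (p / 2) := by
          apply Real.rpow_le_rpow (Finset.sum_nonneg (fun k _ => SqS_nonneg f (s k)))
            (SqS_disjoint_sum f s hdisj)
          positivity
  have hB : (0:ℝ) ≤ ∑ i ∈ f.support, (f i) ^ 2 := by positivity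
  calc (∑ k : Fin n, segNorm (f : ℕ → ℝ) (s k) ^ p) ^ (1 / p)
      ≤ ((∑ i ∈ f.support, (f i) ^ 2) ^ (p / 2)) ^ (1 / p) := by
        apply Real.rpow_le_rpow ?_ key (by positivity)
        apply Finset.sum_nonneg
        intro k _
        exact Real.rpow_nonneg (segNorm_nonneg' f (s k)) p
    _ = Real.sqrt (∑ i ∈ f.support, (f i) ^ 2) := by
        rw [← Real.rpow_mul hB, Real.sqrt_eq_rpow]
        congr 1
        field_simp

theorem cand_bddAbove (hp : 2 < p) (f : ℕ →₀ ℝ) : BddAbove (candSet le p (f : ℕ → ℝ)) :=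
  ⟨_, fun r hr => cand_le hp f r hr⟩

theorem jtNorm_nonneg (hp : 2 < p) (f : ℕ →₀ ℝ) : 0 ≤ jtNorm le p (f : ℕ → ℝ) :=
  le_csSup (cand_bddAbove hp f) (zero_mem_candSet (by linarith) _)

/-- coordinates are dominated by the JT norm -/
theorem abs_le_jtNorm (hb : TreeBase le) (hp : 2 < p) (f : ℕ →₀ ℝ) (i : ℕ) :
    |f i| ≤ jtNorm le p (f : ℕ → ℝ) := by
  have hp0 : p ≠ 0 := by linarith
  apply le_csSup (cand_bddAbove hp f)
  refine ⟨1, fun _ => {k | le i k ∧ le k i}, ?_, ?_, ?_⟩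
  · intro _; exact ⟨i, i, hb.refl i, rfl⟩
  · intro k l hkl; exact absurd (Subsingleton.elim k l) hkl
  · have hset : {k | le i k ∧ le k i} = {i} := by
      ext j
      simp only [Set.mem_setOf_eq, Set.mem_singleton_iff]
      constructor
      · rintro ⟨ha, hb'⟩; exact hb.antisymm hb' ha
      · rintro rfl; exact ⟨hb.refl j, hb.refl j⟩
    have h1 : segNorm (f : ℕ → ℝ) {k | le i k ∧ le k i} = |f i| := by
      rw [hset, segNorm_eq]
      have : SqS f {i} = (f i) ^ 2 := by
        rw [SqS]
        by_cases hi : i ∈ f.support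
        · rw [Finset.sum_eq_single i]
          · rw [Set.indicator_of_mem (Set.mem_singleton i)]
          · intro b _ hbi
            exact Set.indicator_of_notMem (by simpa using hbi) _
          · intro h; exact absurd hi h
        · rw [Finsupp.notMem_support_iff] at hi
          rw [hi]
          have : ∀ b ∈ f.support, ({i} : Set ℕ).indicator (fun j => (f j) ^ 2) b = 0 := by
            intro b hb'
            have hbne : b ≠ i := by
              intro hc; subst hc
              rw [Finsupp.mem_support_iff] at hb'
              exact hb' hi
            exact Set.indicator_of_notMem (by simpa using hbne) _
          rw [Finset.sum_congr rfl this, Finset.sum_const, smul_zero]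
          ring
      rw [this, Real.sqrt_sq_eq_abs]
    rw [Finset.sum_const, Finset.card_univ, Fintype.card_fin, one_smul, h1]
    rw [← Real.rpow_mul (abs_nonneg (f i)), mul_one_div, div_self hp0, Real.rpow_one]

end Analytic

section Transport
open Set

variable {le le' : ℕ → ℕ → Prop} {p : ℝ}

theorem chain_bounds (hb : TreeBase le) (C : Finset ℕ) (hne : C.Nonempty)
    (hch : ∀ x ∈ C, ∀ y ∈ C, le x y ∨ le y x) :
    ∀ x ∈ C, le (C.min' hne) x ∧ le x (C.max' hne) := by
  intro x hx
  constructor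
  · rcases hch _ (C.min'_mem hne) x hx with h | h
    · exact h
    · have : C.min' hne = x := le_antisymm (C.min'_le x hx) (hb.compat h)
      rw [← this]; exact hb.refl _
  · rcases hch x hx _ (C.max'_mem hne) with h | h
    · exact h
    · have : x = C.max' hne := le_antisymm (C.le_max' x hx) (hb.compat h)
      rw [this]; exact hb.refl _

theorem support_equivMapDomain (e : ℕ ≃ ℕ) (f : ℕ →₀ ℝ) :
    (Finsupp.equivMapDomain e f).support = f.support.map e.toEmbedding := by
  ext a
  simp only [Finsupp.mem_support_iff, Finsupp.equivMapDomain_apply, Finset.mem_map,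
    Equiv.coe_toEmbedding]
  constructor
  · intro h
    exact ⟨e.symm a, h, e.apply_symm_apply a⟩
  · rintro ⟨i, hi, rfl⟩
    rwa [e.symm_apply_apply]

theorem SqS_push (e : ℕ ≃ ℕ) (f : ℕ →₀ ℝ) (t : Set ℕ) :
    SqS (Finsupp.equivMapDomain e f) t =
      ∑ i ∈ f.support, t.indicator (fun _ => (f i) ^ 2) (e i) := by
  rw [SqS, support_equivMapDomain, Finset.sum_map]
  simp only [Equiv.coe_toEmbedding]
  apply Finset.sum_congr rfl
  intro i _
  by_cases h : e i ∈ t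
  · rw [Set.indicator_of_mem h, Set.indicator_of_mem h]
    simp [Finsupp.equivMapDomain_apply]
  · rw [Set.indicator_of_notMem h, Set.indicator_of_notMem h]

/-- The key transport inequality. -/
theorem transport_le (hb : TreeBase le) (hb' : TreeBase le') (hp : 2 < p)
    (e : ℕ ≃ ℕ) (S : Set ℕ) (hiff : ∀ m ∈ S, ∀ n ∈ S, (le m n ↔ le' (e m) (e n)))
    (f : ℕ →₀ ℝ) (hf : (f.support : Set ℕ) ⊆ S) :
    jtNorm le' p (Finsupp.equivMapDomain e f : ℕ → ℝ) ≤ jtNorm le p (f : ℕ → ℝ) := by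
  classical
  have hp0 : (0:ℝ) < p := by linarith
  set F := Finsupp.equivMapDomain e f with hF
  rw [jtNorm_eq]
  apply csSup_le ⟨0, zero_mem_candSet hp0 _⟩
  rintro r ⟨n, t, hseg, hdisj, rfl⟩
  choose u v huv htseg using hseg
  set C : Fin n → Finset ℕ := fun k => f.support.filter (fun i => e i ∈ t k) with hC
  set K : Finset (Fin n) := Finset.univ.filter (fun k => (C k).Nonempty) with hK
  -- elements of C k are chains
  have hchain : ∀ k, ∀ x ∈ C k, ∀ y ∈ C k, le x y ∨ le y x := by
    intro k x hx y hy
    rw [hC] at hx hy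
    simp only [Finset.mem_filter] at hx hy
    have hxS : x ∈ S := hf hx.1
    have hyS : y ∈ S := hf hy.1
    have hx2 : le' (e x) (v k) := by
      have := hx.2; rw [htseg k] at this; exact this.2
    have hy2 : le' (e y) (v k) := by
      have := hy.2; rw [htseg k] at this; exact this.2
    rcases hb'.pred_linear (v k) (e x) (e y) hx2 hy2 with h | h
    · exact Or.inl ((hiff x hxS y hyS).2 h)
    · exact Or.inr ((hiff y hyS x hxS).2 h)
  have hKne : ∀ j : Fin K.card, (C ((K.equivFin.symm j : Fin n))).Nonempty := by
    intro j
    exact (Finset.mem_filter.1 (K.equivFin.symm j).2).2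
  set emb : Fin K.card → Fin n := fun j => (K.equivFin.symm j : Fin n) with hemb
  have hembinj : Function.Injective emb := by
    intro a b hab
    exact (Equiv.injective _) (Subtype.ext hab)
  set aa : Fin K.card → ℕ := fun j => (C (emb j)).min' (hKne j) with haa
  set bb : Fin K.card → ℕ := fun j => (C (emb j)).max' (hKne j) with hbb
  have haamem : ∀ j, aa j ∈ C (emb j) := fun j => (C (emb j)).min'_mem (hKne j)
  have hbbmem : ∀ j, bb j ∈ C (emb j) := fun j => (C (emb j)).max'_mem (hKne j)
  have hbounds : ∀ j, ∀ x ∈ C (emb j), le (aa j) x ∧ le x (bb j) :=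
    fun j => chain_bounds hb _ (hKne j) (hchain (emb j))
  have hCmem : ∀ k, ∀ x, x ∈ C k ↔ x ∈ f.support ∧ e x ∈ t k := by
    intro k x; rw [hC]; simp [Finset.mem_filter]
  set s₂ : Fin K.card → Set ℕ := fun j => {x | le (aa j) x ∧ le x (bb j)} with hs₂
  -- membership transfer
  have hmemiff : ∀ j, ∀ i ∈ f.support, (i ∈ s₂ j ↔ e i ∈ t (emb j)) := by
    intro j i hi
    constructor
    · rintro ⟨h1, h2⟩
      have hiS : i ∈ S := hf hi
      have haS : aa j ∈ S := hf ((hCmem _ _).1 (haamem j)).1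
      have hbS : bb j ∈ S := hf ((hCmem _ _).1 (hbbmem j)).1
      have he1 : le' (e (aa j)) (e i) := (hiff _ haS _ hiS).1 h1
      have he2 : le' (e i) (e (bb j)) := (hiff _ hiS _ hbS).1 h2
      have hta : e (aa j) ∈ t (emb j) := ((hCmem _ _).1 (haamem j)).2
      have htb : e (bb j) ∈ t (emb j) := ((hCmem _ _).1 (hbbmem j)).2
      rw [htseg (emb j)] at hta htb ⊢
      exact ⟨hb'.trans hta.1 he1, hb'.trans he2 htb.2⟩
    · intro h
      have : i ∈ C (emb j) := (hCmem _ _).2 ⟨hi, h⟩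
      exact ⟨(hbounds j i this).1, (hbounds j i this).2⟩
  -- disjointness
  have haux : ∀ j j', emb j ≠ emb j' → le (aa j) (aa j') →
      (∃ w, w ∈ s₂ j ∧ w ∈ s₂ j') → False := by
    rintro j j' hne hle ⟨w, ⟨hw1, hw2⟩, ⟨hw1', hw2'⟩⟩
    have h3 : le (aa j') (bb j) := hb.trans hw1' hw2
    have haS : aa j ∈ S := hf ((hCmem _ _).1 (haamem j)).1
    have haS' : aa j' ∈ S := hf ((hCmem _ _).1 (haamem j')).1
    have hbS : bb j ∈ S := hf ((hCmem _ _).1 (hbbmem j)).1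
    have he1 : le' (e (aa j)) (e (aa j')) := (hiff _ haS _ haS').1 hle
    have he2 : le' (e (aa j')) (e (bb j)) := (hiff _ haS' _ hbS).1 h3
    have hta : e (aa j) ∈ t (emb j) := ((hCmem _ _).1 (haamem j)).2
    have htb : e (bb j) ∈ t (emb j) := ((hCmem _ _).1 (hbbmem j)).2
    have hmem : e (aa j') ∈ t (emb j) := by
      rw [htseg (emb j)] at hta htb ⊢
      exact ⟨hb'.trans hta.1 he1, hb'.trans he2 htb.2⟩
    have hmem' : e (aa j') ∈ t (emb j') := ((hCmem _ _).1 (haamem j')).2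
    exact (hdisj _ _ hne).le_bot ⟨hmem, hmem'⟩
  have hdisj₂ : ∀ j j', j ≠ j' → Disjoint (s₂ j) (s₂ j') := by
    intro j j' hjj
    rw [Set.disjoint_left]
    intro w hw hw'
    have hne : emb j ≠ emb j' := fun h => hjj (hembinj h)
    rcases hb.pred_linear w (aa j) (aa j') hw.1 hw'.1 with h | h
    · exact haux j j' hne h ⟨w, hw, hw'⟩
    · exact haux j' j (Ne.symm hne) h ⟨w, hw', hw⟩
  -- SqS equality on K
  have hSqS : ∀ j, SqS F (t (emb j)) = SqS f (s₂ j) := by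
    intro j
    rw [hF, SqS_push, SqS]
    apply Finset.sum_congr rfl
    intro i hi
    by_cases h : e i ∈ t (emb j)
    · rw [Set.indicator_of_mem h, Set.indicator_of_mem ((hmemiff j i hi).2 h)]
    · rw [Set.indicator_of_notMem h,
        Set.indicator_of_notMem (fun hc => h ((hmemiff j i hi).1 hc))]
  -- SqS vanishes off K
  have hSqS0 : ∀ k : Fin n, k ∉ K → SqS F (t k) = 0 := by
    intro k hk
    rw [hK, Finset.mem_filter] at hk
    push_neg at hk
    have hempty : C k = ∅ := by
      exact hk (Finset.mem_univ k)
    rw [hF, SqS_push]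
    apply Finset.sum_eq_zero
    intro i hi
    apply Set.indicator_of_notMem
    intro hc
    have : i ∈ C k := (hCmem _ _).2 ⟨hi, hc⟩
    rw [hempty] at this
    exact absurd this (Finset.notMem_empty i)
  -- reindex the sum
  have hsum : ∑ k : Fin n, segNorm (F : ℕ → ℝ) (t k) ^ p
      = ∑ j : Fin K.card, segNorm (f : ℕ → ℝ) (s₂ j) ^ p := by
    have h1 : ∑ k : Fin n, segNorm (F : ℕ → ℝ) (t k) ^ p
        = ∑ k ∈ K, segNorm (F : ℕ → ℝ) (t k) ^ p := by
      symm
      apply Finset.sum_subset (Finset.subset_univ K)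
      intro k _ hk
      rw [segNorm_eq, hSqS0 k hk, Real.sqrt_zero, Real.zero_rpow (ne_of_gt hp0)]
    have h2 : ∑ k ∈ K, segNorm (F : ℕ → ℝ) (t k) ^ p
        = ∑ j : Fin K.card, segNorm (F : ℕ → ℝ) (t (emb j)) ^ p := by
      rw [← Finset.sum_coe_sort K (fun k => segNorm (F : ℕ → ℝ) (t k) ^ p)]
      exact (Equiv.sum_comp K.equivFin.symm
        (fun x : ↥K => segNorm (F : ℕ → ℝ) (t ↑x) ^ p)).symm
    rw [h1, h2]
    apply Finset.sum_congr rfl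
    intro j _
    rw [segNorm_eq, segNorm_eq, hSqS j]
  rw [hsum]
  apply le_csSup (cand_bddAbove hp f)
  refine ⟨K.card, s₂, ?_, hdisj₂, rfl⟩
  intro j
  exact ⟨aa j, bb j, (hbounds j _ (hbbmem j)).1, rfl⟩

end Transport

section Final
open Set

variable {le le' : ℕ → ℕ → Prop} {p : ℝ}

theorem equivMapDomain_symm_apply (e : ℕ ≃ ℕ) (f : ℕ →₀ ℝ) :
    Finsupp.equivMapDomain e.symm (Finsupp.equivMapDomain e f) = f := by
  ext a
  simp [Finsupp.equivMapDomain_apply]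

theorem transport_eq (hb : TreeBase le) (hb' : TreeBase le') (hp : 2 < p)
    (e : ℕ ≃ ℕ) (S : Set ℕ) (hiff : ∀ m ∈ S, ∀ n ∈ S, (le m n ↔ le' (e m) (e n)))
    (f : ℕ →₀ ℝ) (hf : (f.support : Set ℕ) ⊆ S) :
    jtNorm le' p (Finsupp.equivMapDomain e f : ℕ → ℝ) = jtNorm le p (f : ℕ → ℝ) := by
  apply le_antisymm (transport_le hb hb' hp e S hiff f hf)
  have hiff' : ∀ m ∈ e '' S, ∀ n ∈ e '' S, (le' m n ↔ le (e.symm m) (e.symm n)) := by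
    rintro m ⟨m₀, hm₀, rfl⟩ n ⟨n₀, hn₀, rfl⟩
    rw [e.symm_apply_apply, e.symm_apply_apply]
    exact (hiff m₀ hm₀ n₀ hn₀).symm
  have hf' : ((Finsupp.equivMapDomain e f).support : Set ℕ) ⊆ e '' S := by
    intro a ha
    rw [Finset.mem_coe, Finsupp.mem_support_iff, Finsupp.equivMapDomain_apply] at ha
    refine ⟨e.symm a, hf ?_, e.apply_symm_apply a⟩
    rw [Finset.mem_coe, Finsupp.mem_support_iff]
    exact ha
  have := transport_le hb' hb hp e.symm (e '' S) hiff' (Finsupp.equivMapDomain e f) hf'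
  rwa [equivMapDomain_symm_apply] at this

theorem SqS_filter_le (f : ℕ →₀ ℝ) (S : Set ℕ) [DecidablePred (· ∈ S)] (s : Set ℕ) :
    SqS (f.filter (· ∈ S)) s ≤ SqS f s := by
  rw [SqS, SqS]
  have h1 : ∀ i ∈ (f.filter (· ∈ S)).support,
      s.indicator (fun j => ((f.filter (· ∈ S)) j) ^ 2) i = s.indicator (fun j => (f j) ^ 2) i := by
    intro i hi
    rw [Finsupp.support_filter, Finset.mem_filter] at hi
    by_cases h : i ∈ s
    · rw [Set.indicator_of_mem h, Set.indicator_of_mem h, Finsupp.filter_apply, if_pos hi.2]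
    · rw [Set.indicator_of_notMem h, Set.indicator_of_notMem h]
  rw [Finset.sum_congr rfl h1]
  apply Finset.sum_le_sum_of_subset_of_nonneg
  · rw [Finsupp.support_filter]
    exact Finset.filter_subset _ _
  · intro i _ _
    apply Set.indicator_nonneg
    intro j _
    positivity

theorem segNorm_filter_le (f : ℕ →₀ ℝ) (S : Set ℕ) [DecidablePred (· ∈ S)] (s : Set ℕ) :
    segNorm ((f.filter (· ∈ S)) : ℕ → ℝ) s ≤ segNorm (f : ℕ → ℝ) s := by
  rw [segNorm_eq, segNorm_eq]
  exact Real.sqrt_le_sqrt (SqS_filter_le f S s)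

theorem jtNorm_filter_le (hp : 2 < p) (f : ℕ →₀ ℝ) (S : Set ℕ) [DecidablePred (· ∈ S)] :
    jtNorm le p ((f.filter (· ∈ S)) : ℕ → ℝ) ≤ jtNorm le p (f : ℕ → ℝ) := by
  have hp0 : (0:ℝ) < p := by linarith
  rw [jtNorm_eq]
  apply csSup_le ⟨0, zero_mem_candSet hp0 _⟩
  rintro r ⟨n, s, hseg, hdisj, rfl⟩
  have hmono : (∑ k : Fin n, segNorm ((f.filter (· ∈ S)) : ℕ → ℝ) (s k) ^ p) ^ (1/p)
      ≤ (∑ k : Fin n, segNorm (f : ℕ → ℝ) (s k) ^ p) ^ (1/p) := by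
    apply Real.rpow_le_rpow
    · apply Finset.sum_nonneg
      intro k _
      exact Real.rpow_nonneg (segNorm_nonneg' _ _) p
    · apply Finset.sum_le_sum
      intro k _
      exact Real.rpow_le_rpow (segNorm_nonneg' _ _) (segNorm_filter_le f S (s k)) (le_of_lt hp0)
    · positivity
  exact le_trans hmono (le_csSup (cand_bddAbove hp f) ⟨n, s, hseg, hdisj, rfl⟩)

/-- extension of a bounded map along a dense isometric-type embedding -/
theorem ext_clm {X Y : Type*} [NormedAddCommGroup X] [NormedSpace ℝ X]
    [NormedAddCommGroup Y] [NormedSpace ℝ Y] [CompleteSpace Y]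
    (J : (ℕ →₀ ℝ) →ₗ[ℝ] X) (hJinj : ∀ f, J f = 0 → f = 0) (hdense : DenseRange J)
    (K : (ℕ →₀ ℝ) →ₗ[ℝ] Y) (c : ℝ) (hc : ∀ f, ‖K f‖ ≤ c * ‖J f‖) :
    ∃ T : X →L[ℝ] Y, ∀ f, T (J f) = K f := by
  letI : NormedAddCommGroup (ℕ →₀ ℝ) := AddGroupNorm.toNormedAddCommGroup
    { toFun := fun f => ‖J f‖
      map_zero' := by simp
      add_le' := fun f g => by simpa using norm_add_le (J f) (J g)
      neg' := fun f => by simp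
      eq_zero_of_map_eq_zero' := fun f hf => hJinj f (norm_eq_zero.1 hf) }
  letI : NormedSpace ℝ (ℕ →₀ ℝ) :=
    { norm_smul_le := fun a f => by
        have : ‖J (a • f)‖ = ‖a‖ * ‖J f‖ := by rw [map_smul, norm_smul]
        exact le_of_eq this }
  have hnorm : ∀ f : ℕ →₀ ℝ, ‖f‖ = ‖J f‖ := fun f => rfl
  set Jc : (ℕ →₀ ℝ) →L[ℝ] X := J.mkContinuous 1 (fun f => by rw [hnorm, one_mul]) with hJc
  have hJcf : ∀ f, Jc f = J f := fun f => rfl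
  have hiso : Isometry (⇑Jc) := by
    apply Isometry.of_dist_eq
    intro a b
    rw [dist_eq_norm, dist_eq_norm, hnorm, ← map_sub]
    rfl
  have hdense' : DenseRange ⇑Jc := by
    have : ⇑Jc = ⇑J := rfl
    rw [this]; exact hdense
  set Kc : (ℕ →₀ ℝ) →L[ℝ] Y := K.mkContinuous c (fun f => by rw [hnorm]; exact hc f) with hKc
  refine ⟨Kc.extend Jc, ?_⟩
  intro f
  have := ContinuousLinearMap.extend_eq Kc hdense' hiso.isUniformInducing f
  rw [hJcf] at this
  rw [this]
  rfl

end Final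

theorem stmt19 (le le' : ℕ → ℕ → Prop) (hT : IsJTTree le) (hD : IsDyadicTree le')
    (p : ℝ) (hp : 2 < p)
    (X : Type*) [NormedAddCommGroup X] [NormedSpace ℝ X] [CompleteSpace X]
    (J : (ℕ →₀ ℝ) →ₗ[ℝ] X)
    (hJ : ∀ f : ℕ →₀ ℝ, ‖J f‖ = jtNorm le p (f : ℕ → ℝ))
    (hdense : DenseRange J)
    (X' : Type*) [NormedAddCommGroup X'] [NormedSpace ℝ X'] [CompleteSpace X']
    (J' : (ℕ →₀ ℝ) →ₗ[ℝ] X')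
    (hJ' : ∀ f : ℕ →₀ ℝ, ‖J' f‖ = jtNorm le' p (f : ℕ → ℝ))
    (hdense' : DenseRange J') :
    Nonempty (X ≃L[ℝ] X') := by
  classical
  obtain ⟨e, S, hiff1, hiff2⟩ := exists_good_equiv hT hD
  letI dmemS : DecidablePred (· ∈ S) := fun a => Classical.propDecidable _
  letI dmemSc : DecidablePred (· ∈ Sᶜ) := fun a => Classical.propDecidable _
  letI dmemI : DecidablePred (· ∈ e '' S) := fun a => Classical.propDecidable _
  letI dmemIc : DecidablePred (· ∈ e '' Sᶜ) := fun a => Classical.propDecidable _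
  have hbT := hT.base
  have hbD := hD.base
  set Glin : (ℕ →₀ ℝ) →ₗ[ℝ] (ℕ →₀ ℝ) :=
    (Finsupp.domLCongr e : (ℕ →₀ ℝ) ≃ₗ[ℝ] (ℕ →₀ ℝ)).toLinearMap with hGlindef
  set Glin' : (ℕ →₀ ℝ) →ₗ[ℝ] (ℕ →₀ ℝ) :=
    (Finsupp.domLCongr e.symm : (ℕ →₀ ℝ) ≃ₗ[ℝ] (ℕ →₀ ℝ)).toLinearMap with hGlindef'
  have hGlin : ∀ g : ℕ →₀ ℝ, Glin g = Finsupp.equivMapDomain e g := by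
    intro g; rw [hGlindef]; simp [Finsupp.domLCongr_apply]
  have hGlin' : ∀ g : ℕ →₀ ℝ, Glin' g = Finsupp.equivMapDomain e.symm g := by
    intro g; rw [hGlindef']; simp [Finsupp.domLCongr_apply]
  have hGG' : ∀ g : ℕ →₀ ℝ, Glin' (Glin g) = g := by
    intro g; rw [hGlin, hGlin', equivMapDomain_symm_apply]
  have hG'G : ∀ g : ℕ →₀ ℝ, Glin (Glin' g) = g := by
    intro g
    rw [hGlin, hGlin']
    have := equivMapDomain_symm_apply e.symm g
    rwa [Equiv.symm_symm] at this
  -- split of a finsupp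
  have hsplit : ∀ f : ℕ →₀ ℝ, f.filter (· ∈ S) + f.filter (· ∈ Sᶜ) = f := by
    intro f
    ext a
    rw [Finsupp.add_apply, Finsupp.filter_apply, Finsupp.filter_apply]
    by_cases h : a ∈ S
    · rw [if_pos h, if_neg (by simpa using h), add_zero]
    · rw [if_neg h, if_pos (by simpa using h), zero_add]
  have hsupp : ∀ (U : Set ℕ) (f : ℕ →₀ ℝ), ((f.filter (· ∈ U)).support : Set ℕ) ⊆ U := by
    intro U f a ha
    rw [Finset.mem_coe, Finsupp.support_filter, Finset.mem_filter] at ha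
    exact ha.2
  have hiffc : ∀ m ∈ Sᶜ, ∀ n ∈ Sᶜ, (le m n ↔ le' (e m) (e n)) :=
    fun m hm n hn => hiff2 m hm n hn
  -- pushing filters through the equiv
  have hGfilt : ∀ (U : Set ℕ) (f : ℕ →₀ ℝ),
      Finsupp.equivMapDomain e (f.filter (· ∈ U)) =
      (Finsupp.equivMapDomain e f).filter (· ∈ e '' U) := by
    intro U f
    ext a
    rw [Finsupp.equivMapDomain_apply, Finsupp.filter_apply, Finsupp.filter_apply,
      Finsupp.equivMapDomain_apply]
    have hmem : a ∈ e '' U ↔ e.symm a ∈ U := by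
      constructor
      · rintro ⟨x, hx, rfl⟩; rwa [e.symm_apply_apply]
      · intro h; exact ⟨e.symm a, h, e.apply_symm_apply a⟩
    by_cases h : e.symm a ∈ U
    · rw [if_pos h, if_pos (hmem.2 h)]
    · rw [if_neg h, if_neg (fun hc => h (hmem.1 hc))]
  -- the two transport identities
  have ht1 : ∀ f : ℕ →₀ ℝ,
      jtNorm le' p ((Finsupp.equivMapDomain e (f.filter (· ∈ S))) : ℕ → ℝ)
        = jtNorm le p ((f.filter (· ∈ S)) : ℕ → ℝ) :=
    fun f => transport_eq hbT hbD hp e S hiff1 _ (hsupp S f)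
  have ht2 : ∀ f : ℕ →₀ ℝ,
      jtNorm le' p ((Finsupp.equivMapDomain e (f.filter (· ∈ Sᶜ))) : ℕ → ℝ)
        = jtNorm le p ((f.filter (· ∈ Sᶜ)) : ℕ → ℝ) :=
    fun f => transport_eq hbT hbD hp e Sᶜ hiffc _ (hsupp Sᶜ f)
  -- main estimates
  have hEle : ∀ f : ℕ →₀ ℝ, ‖J' (Glin f)‖ ≤ 2 * ‖J f‖ := by
    intro f
    have h0 : Glin f = Glin (f.filter (· ∈ S)) + Glin (f.filter (· ∈ Sᶜ)) := by
      rw [← map_add, hsplit]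
    have h1 : ‖J' (Glin (f.filter (· ∈ S)))‖ ≤ ‖J f‖ := by
      rw [hJ', hGlin, ht1, hJ]
      exact jtNorm_filter_le hp f S
    have h2 : ‖J' (Glin (f.filter (· ∈ Sᶜ)))‖ ≤ ‖J f‖ := by
      rw [hJ', hGlin, ht2, hJ]
      exact jtNorm_filter_le hp f Sᶜ
    calc ‖J' (Glin f)‖ = ‖J' (Glin (f.filter (· ∈ S))) + J' (Glin (f.filter (· ∈ Sᶜ)))‖ := by
          rw [← map_add, ← h0]
      _ ≤ ‖J' (Glin (f.filter (· ∈ S)))‖ + ‖J' (Glin (f.filter (· ∈ Sᶜ)))‖ := norm_add_le _ _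
      _ ≤ ‖J f‖ + ‖J f‖ := add_le_add h1 h2
      _ = 2 * ‖J f‖ := by ring
  have hEge : ∀ f : ℕ →₀ ℝ, ‖J f‖ ≤ 2 * ‖J' (Glin f)‖ := by
    intro f
    have hf1 : ‖J (f.filter (· ∈ S))‖ ≤ ‖J' (Glin f)‖ := by
      rw [hJ, ← ht1, hJ', hGlin, hGfilt]
      have := jtNorm_filter_le (le := le') hp (Finsupp.equivMapDomain e f) (e '' S)
      exact this
    have hf2 : ‖J (f.filter (· ∈ Sᶜ))‖ ≤ ‖J' (Glin f)‖ := by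
      rw [hJ, ← ht2, hJ', hGlin, hGfilt]
      have := jtNorm_filter_le (le := le') hp (Finsupp.equivMapDomain e f) (e '' Sᶜ)
      exact this
    calc ‖J f‖ = ‖J (f.filter (· ∈ S)) + J (f.filter (· ∈ Sᶜ))‖ := by
          rw [← map_add, hsplit]
      _ ≤ ‖J (f.filter (· ∈ S))‖ + ‖J (f.filter (· ∈ Sᶜ))‖ := norm_add_le _ _
      _ ≤ ‖J' (Glin f)‖ + ‖J' (Glin f)‖ := add_le_add hf1 hf2
      _ = 2 * ‖J' (Glin f)‖ := by ring
  -- injectivity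
  have hJinj : ∀ f : ℕ →₀ ℝ, J f = 0 → f = 0 := by
    intro f hf
    ext i
    have h1 : |f i| ≤ jtNorm le p (f : ℕ → ℝ) := abs_le_jtNorm hbT hp f i
    rw [← hJ, hf, norm_zero] at h1
    simpa using le_antisymm h1 (abs_nonneg _)
  have hJ'inj : ∀ f : ℕ →₀ ℝ, J' f = 0 → f = 0 := by
    intro f hf
    ext i
    have h1 : |f i| ≤ jtNorm le' p (f : ℕ → ℝ) := abs_le_jtNorm hbD hp f i
    rw [← hJ', hf, norm_zero] at h1
    simpa using le_antisymm h1 (abs_nonneg _)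
  -- extensions
  obtain ⟨T, hTeq⟩ := ext_clm J hJinj hdense (J'.comp Glin) 2
    (fun f => by simpa using hEle f)
  obtain ⟨Sop, hSeq⟩ := ext_clm J' hJ'inj hdense' (J.comp Glin') 2
    (fun h => by
      have := hEge (Glin' h)
      rw [hG'G] at this
      simpa using this)
  have hST : ∀ x, Sop (T x) = x := by
    have heq : (⇑Sop ∘ ⇑T) = id := by
      apply hdense.equalizer (Sop.continuous.comp T.continuous) continuous_id
      funext f
      simp only [Function.comp_apply, id_eq]
      rw [hTeq f]
      have : J' (Glin f) = J'.comp Glin f := rfl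
      rw [← this]  -- no-op safety
      have h2 := hSeq (Glin f)
      simp only [LinearMap.comp_apply] at h2 ⊢
      rw [h2, hGG']
    intro x
    exact congrFun heq x
  have hTS : ∀ x, T (Sop x) = x := by
    have heq : (⇑T ∘ ⇑Sop) = id := by
      apply hdense'.equalizer (T.continuous.comp Sop.continuous) continuous_id
      funext f
      simp only [Function.comp_apply, id_eq]
      rw [hSeq f]
      have h2 := hTeq (Glin' f)
      simp only [LinearMap.comp_apply] at h2 ⊢
      rw [h2, hG'G]
    intro x
    exact congrFun heq x
  exact ⟨ContinuousLinearEquiv.equivOfInverse T Sop hST hTS⟩
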